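/- Let f : ℝ^d → ℝ be twice differentiable (possibly non-convex) such that all eigenvalues of its Hessian are bounded below by −μ with 0 < μ < 1 (equivalently, ⟨∇f(u) − ∇f(v), u − v⟩ ≥ −μ‖u − v‖² for all u, v). Define prox_f(x) = argmin_y { f(y) + (1/2)‖y − x‖² }, assumed to admit a minimizer at each point. Then for any x₁, x₂ ∈ ℝ^d, ‖prox_f(x₁) − prox_f(x₂)‖ ≤ (1/(1 − μ)) ‖x₁ − x₂‖. -/
import Mathlib


open RealInnerProductSpace

/-- **Quasi-non-expansiveness of the proximal operator of a weakly convex function.**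
Let `f : ℝ^d → ℝ` be twice differentiable (possibly non-convex) whose Hessian eigenvalues are
bounded below by `−μ` with `0 < μ < 1`; equivalently,
`⟪∇f u − ∇f v, u − v⟫ ≥ −μ‖u − v‖²` for all `u, v`.  Let `prox : ℝ^d → ℝ^d` be such that
`prox x` minimizes `y ↦ f y + (1/2)‖y − x‖²` (so it satisfies the first-order condition
`∇f (prox x) + prox x − x = 0`).  Then
`‖prox x₁ − prox x₂‖ ≤ (1/(1 − μ)) ‖x₁ − x₂‖` for all `x₁ x₂`. -/
theorem prox_lipschitz_of_weakly_convex
    {d : ℕ} (f : EuclideanSpace ℝ (Fin d) → ℝ) (μ : ℝ)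
    (hμ0 : 0 < μ) (hμ1 : μ < 1)
    (hdiff : ContDiff ℝ 2 f)
    (hweak : ∀ u v : EuclideanSpace ℝ (Fin d),
      -μ * ‖u - v‖ ^ 2 ≤ ⟪gradient f u - gradient f v, u - v⟫)
    (prox : EuclideanSpace ℝ (Fin d) → EuclideanSpace ℝ (Fin d))
    (hprox : ∀ x y : EuclideanSpace ℝ (Fin d),
      f (prox x) + (1 / 2) * ‖prox x - x‖ ^ 2 ≤ f y + (1 / 2) * ‖y - x‖ ^ 2)
    (hfoc : ∀ x : EuclideanSpace ℝ (Fin d), gradient f (prox x) + prox x - x = 0)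
    (x₁ x₂ : EuclideanSpace ℝ (Fin d)) :
    ‖prox x₁ - prox x₂‖ ≤ (1 / (1 - μ)) * ‖x₁ - x₂‖ := by
  set u := prox x₁
  set v := prox x₂
  have h1 : x₁ = gradient f u + u := by
    have := hfoc x₁; rw [sub_eq_zero] at this; exact this.symm
  have h2 : x₂ = gradient f v + v := by
    have := hfoc x₂; rw [sub_eq_zero] at this; exact this.symm
  have key : (1 - μ) * ‖u - v‖ ^ 2 ≤ ⟪x₁ - x₂, u - v⟫ := by
    have hw := hweak u v
    have : x₁ - x₂ = (gradient f u - gradient f v) + (u - v) := by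
      rw [h1, h2]; abel
    rw [this, inner_add_left, real_inner_self_eq_norm_sq]
    nlinarith [hw]
  have hcs : ⟪x₁ - x₂, u - v⟫ ≤ ‖x₁ - x₂‖ * ‖u - v‖ := real_inner_le_norm _ _
  have h1μ : 0 < 1 - μ := by linarith
  rcases eq_or_lt_of_le (norm_nonneg (u - v)) with h | h
  · rw [← h]; positivity
  · rw [div_mul_eq_mul_div, le_div_iff₀ h1μ]
    have : (1 - μ) * ‖u - v‖ * ‖u - v‖ ≤ ‖x₁ - x₂‖ * ‖u - v‖ := by
      nlinarith
    nlinarith
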